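/- Let π be a projective plane of prime order p with point set P, let Y be a p-admissible incidence system with k lines ℓ_0, ..., ℓ_{k−1} where p ≥ 2^k, and set w = ∑_{i<k} 2^i ℓ_i ∈ F_p^Q (indicator sums over the point set Q of Y). If w′ ∈ C_p(π) has the same type as w, then there exist k lines ℓ′_0, ..., ℓ′_{k−1} of π with w′ = ∑_{i<k} 2^i ℓ′_i, and there is a monomorphism f from Y into π with f(ℓ_i) = ℓ′_i for all i. -/

import Mathlib

lemma aux_geom (k : ℕ) : (∑ i ∈ Finset.range k, 2 ^ i) + 1 = 2 ^ k := by
  induction k with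
  | zero => simp
  | succ n ih =>
    rw [Finset.sum_range_succ, pow_succ]
    omega

lemma aux_2k (k : ℕ) : 2 * k ≤ 2 ^ k := by
  induction k with
  | zero => simp
  | succ n ih =>
    have h2 : 1 ≤ 2 ^ n := Nat.one_le_two_pow
    rw [pow_succ]
    omega

lemma aux_kk (k : ℕ) : k * (k + 1) ≤ 2 ^ (k + 1) := by
  induction k with
  | zero => simp
  | succ n ih =>
    rcases Nat.lt_or_ge n 2 with h | h
    · interval_cases n <;> norm_num
    · have : (n + 1) * (n + 2) ≤ 2 * (n * (n + 1)) := by nlinarith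
      calc (n + 1) * (n + 1 + 1) ≤ 2 * (n * (n + 1)) := this
        _ ≤ 2 * 2 ^ (n + 1) := by omega
        _ = 2 ^ (n + 1 + 1) := by ring

lemma aux_sum_two_pow_inj : ∀ (n : ℕ) (S T : Finset ℕ),
    (∑ i ∈ S, 2 ^ i) = n → (∑ i ∈ T, 2 ^ i) = n → S = T := by
  intro n
  induction n using Nat.strong_induction_on with
  | _ n ih =>
  intro S T hS hT
  have hzero : ∀ U : Finset ℕ, (∑ i ∈ U, 2 ^ i) = 0 → U = ∅ := by
    intro U hU
    by_contra hne
    obtain ⟨j, hj⟩ := Finset.nonempty_iff_ne_empty.mpr hne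
    have h2 : 2 ^ j ≤ ∑ i ∈ U, 2 ^ i :=
      Finset.single_le_sum (fun _ _ => Nat.zero_le _) hj
    have := Nat.one_le_two_pow (n := j)
    omega
  rcases Nat.eq_zero_or_pos n with rfl | hn
  · rw [hzero S hS, hzero T hT]
  have hSne : S.Nonempty := by
    by_contra h
    rw [Finset.not_nonempty_iff_eq_empty] at h
    subst h; simp at hS; omega
  have hTne : T.Nonempty := by
    by_contra h
    rw [Finset.not_nonempty_iff_eq_empty] at h
    subst h; simp at hT; omega
  have key : ∀ (U : Finset ℕ) (hU : U.Nonempty), (∑ i ∈ U, 2 ^ i) = n →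
      2 ^ (U.max' hU) ≤ n ∧ n < 2 ^ (U.max' hU + 1) := by
    intro U hU hsum
    constructor
    · rw [← hsum]
      exact Finset.single_le_sum (fun _ _ => Nat.zero_le _) (U.max'_mem hU)
    · rw [← hsum]
      have hsub : U ⊆ Finset.range (U.max' hU + 1) := by
        intro i hi
        exact Finset.mem_range.mpr (Nat.lt_succ_of_le (U.le_max' i hi))
      calc ∑ i ∈ U, 2 ^ i ≤ ∑ i ∈ Finset.range (U.max' hU + 1), 2 ^ i :=
            Finset.sum_le_sum_of_subset hsub
        _ < 2 ^ (U.max' hU + 1) := by have := aux_geom (U.max' hU + 1); omega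
  obtain ⟨hS1, hS2⟩ := key S hSne hS
  obtain ⟨hT1, hT2⟩ := key T hTne hT
  set a := S.max' hSne with ha
  set b := T.max' hTne with hb
  have hab : a = b := by
    rcases lt_trichotomy a b with h | h | h
    · have : 2 ^ (a + 1) ≤ 2 ^ b := Nat.pow_le_pow_right (by norm_num) h
      omega
    · exact h
    · have : 2 ^ (b + 1) ≤ 2 ^ a := Nat.pow_le_pow_right (by norm_num) h
      omega
  have haS : a ∈ S := S.max'_mem hSne
  have hbT : b ∈ T := T.max'_mem hTne
  have hSe : (∑ i ∈ S.erase a, 2 ^ i) = n - 2 ^ a := by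
    have h := Finset.add_sum_erase S (fun i => 2 ^ i) haS
    rw [hS] at h
    omega
  have hTe : (∑ i ∈ T.erase a, 2 ^ i) = n - 2 ^ a := by
    rw [hab]
    have h := Finset.add_sum_erase T (fun i => 2 ^ i) hbT
    rw [hT] at h
    omega
  have hlt : n - 2 ^ a < n := by
    have := Nat.one_le_two_pow (n := a)
    omega
  have := ih (n - 2 ^ a) hlt (S.erase a) (T.erase a) hSe hTe
  rw [← Finset.insert_erase haS, this, hab, Finset.insert_erase hbT]

lemma aux_dup_split {s : Multiset ℕ} (h : ¬ s.Nodup) : ∃ a u, s = a ::ₘ a ::ₘ u := by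
  rw [Multiset.nodup_iff_count_le_one] at h
  push_neg at h
  obtain ⟨a, ha⟩ := h
  have h1 : a ∈ s := by rw [← Multiset.count_pos]; omega
  have h2 : a ∈ s.erase a := by
    rw [← Multiset.count_pos, Multiset.count_erase_self]; omega
  exact ⟨a, (s.erase a).erase a, by rw [Multiset.cons_erase h2, Multiset.cons_erase h1]⟩

lemma aux_nodup_powers {s : Multiset ℕ} (hnd : s.Nodup) (hpow : ∀ a ∈ s, ∃ j, a = 2 ^ j)
    {k : ℕ} (hsum : s.sum + 1 = 2 ^ k) :
    s = (Multiset.range k).map (2 ^ ·) ∧ Multiset.card s = k := by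
  set F : Finset ℕ := ⟨s, hnd⟩ with hF
  have hmemF : ∀ a, a ∈ F ↔ a ∈ s := fun a => Iff.rfl
  have hFsum : ∑ a ∈ F, a = s.sum := by
    rw [Finset.sum]
    exact congrArg Multiset.sum (Multiset.map_id' s)
  have hlog : ∀ a ∈ F, a = 2 ^ Nat.log 2 a := by
    intro a ha
    obtain ⟨j, rfl⟩ := hpow a ha
    rw [Nat.log_pow (by norm_num)]
  have hinj : ∀ x ∈ F, ∀ y ∈ F, Nat.log 2 x = Nat.log 2 y → x = y := by
    intro x hx y hy hxy
    rw [hlog x hx, hlog y hy, hxy]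
  set J := F.image (Nat.log 2) with hJ
  have hJcard : J.card = F.card := Finset.card_image_of_injOn hinj
  have hJsum : ∑ j ∈ J, 2 ^ j = s.sum := by
    rw [hJ, Finset.sum_image hinj, ← hFsum]
    exact Finset.sum_congr rfl (fun a ha => (hlog a ha).symm)
  have hrange : ∑ i ∈ Finset.range k, 2 ^ i = s.sum := by
    have := aux_geom k; omega
  have hJr : J = Finset.range k := aux_sum_two_pow_inj s.sum J (Finset.range k) hJsum hrange
  have hpowinj : Function.Injective (fun j : ℕ => 2 ^ j) :=
    fun a b h => Nat.pow_right_injective (by norm_num) h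
  have hFim : F = (Finset.range k).image (2 ^ ·) := by
    apply Finset.eq_of_subset_of_card_le
    · intro a ha
      refine Finset.mem_image.mpr ⟨Nat.log 2 a, ?_, (hlog a ha).symm⟩
      rw [← hJr, hJ]
      exact Finset.mem_image_of_mem _ ha
    · calc ((Finset.range k).image (2 ^ ·)).card ≤ k := by
            simpa using Finset.card_image_le (s := Finset.range k) (f := (2 ^ ·))
        _ = J.card := by rw [hJr, Finset.card_range]
        _ = F.card := hJcard
  have hval : s = F.val := rfl
  constructor
  · rw [hval, hFim, Finset.image_val_of_injOn (hpowinj.injOn), Finset.range_val]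
  · have : F.card = k := by
      rw [hFim]
      rw [Finset.card_image_of_injOn (hpowinj.injOn), Finset.card_range]
    exact this

lemma aux_multiset_le : ∀ (c : ℕ) (s : Multiset ℕ), Multiset.card s = c →
    (∀ a ∈ s, ∃ j, a = 2 ^ j) → ∀ k, s.sum + 1 = 2 ^ k → k ≤ c := by
  intro c
  induction c using Nat.strong_induction_on with
  | _ c ih =>
  intro s hcard hpow k hsum
  by_cases hnd : s.Nodup
  · rw [← hcard, (aux_nodup_powers hnd hpow hsum).2]
  · obtain ⟨a, u, rfl⟩ := aux_dup_split hnd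
    obtain ⟨j, haj⟩ := hpow a (Multiset.mem_cons_self _ _)
    subst haj
    set s' : Multiset ℕ := (2 ^ (j + 1)) ::ₘ u with hs'
    have hpow' : ∀ b ∈ s', ∃ i, b = 2 ^ i := by
      intro b hb
      rcases Multiset.mem_cons.mp hb with rfl | hb
      · exact ⟨j + 1, rfl⟩
      · exact hpow b (Multiset.mem_cons_of_mem (Multiset.mem_cons_of_mem hb))
    have hsum' : s'.sum + 1 = 2 ^ k := by
      rw [hs', Multiset.sum_cons]
      simp only [Multiset.sum_cons] at hsum
      rw [pow_succ]
      omega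
    have hle := ih (Multiset.card s') (by simp only [← hcard, hs', Multiset.card_cons]; omega)
      s' rfl hpow' k hsum'
    simp only [hs', Multiset.card_cons] at hle
    simp only [Multiset.card_cons] at hcard
    omega

lemma aux_multiset_eq (s : Multiset ℕ) (hpow : ∀ a ∈ s, ∃ j, a = 2 ^ j)
    (k : ℕ) (hsum : s.sum + 1 = 2 ^ k) (hcard : Multiset.card s ≤ k) :
    s = (Multiset.range k).map (2 ^ ·) := by
  by_cases hnd : s.Nodup
  · exact (aux_nodup_powers hnd hpow hsum).1
  · exfalso
    obtain ⟨a, u, rfl⟩ := aux_dup_split hnd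
    obtain ⟨j, haj⟩ := hpow a (Multiset.mem_cons_self _ _)
    subst haj
    set s' : Multiset ℕ := (2 ^ (j + 1)) ::ₘ u with hs'
    have hpow' : ∀ b ∈ s', ∃ i, b = 2 ^ i := by
      intro b hb
      rcases Multiset.mem_cons.mp hb with rfl | hb
      · exact ⟨j + 1, rfl⟩
      · exact hpow b (Multiset.mem_cons_of_mem (Multiset.mem_cons_of_mem hb))
    have hsum' : s'.sum + 1 = 2 ^ k := by
      rw [hs', Multiset.sum_cons]
      simp only [Multiset.sum_cons] at hsum
      rw [pow_succ]
      omega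
    have hle := aux_multiset_le (Multiset.card s') s' rfl hpow' k hsum'
    simp only [hs', Multiset.card_cons] at hle hcard
    omega

lemma aux_sum_ind {α : Type*} (s : Finset α) (q : α → Prop) [DecidablePred q] :
    (∑ a ∈ s, if q a then (1:ℕ) else 0) = (s.filter q).card := by
  rw [Finset.sum_ite, Finset.sum_const, Finset.sum_const_zero, smul_eq_mul, mul_one, add_zero]

lemma aux_sig_inj {k : ℕ} : ∀ S T : Finset (Fin k),
    (∑ i ∈ S, 2 ^ (i : ℕ)) = (∑ i ∈ T, 2 ^ (i : ℕ)) → S = T := by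
  intro S T h
  have h1 : ∑ j ∈ S.image (Fin.val), 2 ^ j = ∑ i ∈ S, 2 ^ (i : ℕ) :=
    Finset.sum_image (fun x _ y _ hxy => Fin.val_injective hxy)
  have h2 : ∑ j ∈ T.image (Fin.val), 2 ^ j = ∑ i ∈ T, 2 ^ (i : ℕ) :=
    Finset.sum_image (fun x _ y _ hxy => Fin.val_injective hxy)
  have h3 := aux_sum_two_pow_inj (∑ i ∈ T, 2 ^ (i : ℕ)) _ _ (h1.trans h) h2
  exact Finset.image_injective (f := (Fin.val : Fin k → ℕ)) Fin.val_injective h3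

/-- A projective plane of order `p` on a finite point type `P`, with set of lines `L`:
`p² + p + 1` points, each line has `p + 1` points, each point lies on `p + 1` lines, any
two distinct points lie on a unique line, and any two distinct lines meet in a unique
point. -/
def IsProjPlane {P : Type} [Fintype P] [DecidableEq P] (p : ℕ) (L : Finset (Finset P)) :
    Prop :=
  Fintype.card P = p ^ 2 + p + 1 ∧ (∀ ℓ ∈ L, ℓ.card = p + 1) ∧
    (∀ x : P, (L.filter (fun ℓ => x ∈ ℓ)).card = p + 1) ∧
    (∀ x y : P, x ≠ y → ∃! ℓ, ℓ ∈ L ∧ x ∈ ℓ ∧ y ∈ ℓ) ∧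
    (∀ ℓ₁ ∈ L, ∀ ℓ₂ ∈ L, ℓ₁ ≠ ℓ₂ → ∃! x : P, x ∈ ℓ₁ ∧ x ∈ ℓ₂)

set_option maxHeartbeats 1000000 in
/-- Lemma 3.9: let `π` be a projective plane of prime order `p` with point type `P` and
lines `L`, and let `Y` be a `p`-admissible incidence system (point type `Q`, lines `LY`)
with exactly `k` lines `ℓ 0, …, ℓ (k−1)`, where `2^k ≤ p`.  Set
`w = ∑ i, 2^i · 1_{ℓ i} ∈ F_p^Q`.  If `w' ∈ C_p(π)` has the same type as `w`, then there
are `k` distinct lines `ℓ' i` of `π` with `w' = ∑ i, 2^i · 1_{ℓ' i}`, and a monomorphism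
`f : Q → P` from `Y` into `π` with `f(ℓ i) = ℓ' i` for all `i`. -/
theorem word_of_type_comes_from_lines (p k : ℕ) (hp : p.Prime) (hpk : 2 ^ k ≤ p)
    {P : Type} [Fintype P] [DecidableEq P] (L : Finset (Finset P)) (hπ : IsProjPlane p L)
    {Q : Type} [Fintype Q] [DecidableEq Q] (LY : Finset (Finset Q))
    (hQcard : Fintype.card Q = p ^ 2 + p + 1)
    (hYline : ∀ m ∈ LY, m.card = p + 1)
    (hYmeet : ∀ m₁ ∈ LY, ∀ m₂ ∈ LY, m₁ ≠ m₂ → (m₁ ∩ m₂).card = 1)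
    (hLYcard : LY.card = k)
    (ℓ : Fin k → Finset Q) (hℓinj : Function.Injective ℓ) (hℓmem : ∀ i, ℓ i ∈ LY)
    (w : Q → ZMod p)
    (hw : w = fun x => ∑ i : Fin k, (2 ^ (i : ℕ) : ZMod p) *
      (if x ∈ ℓ i then (1 : ZMod p) else 0))
    (w' : P → ZMod p)
    (hw' : w' ∈ Submodule.span (ZMod p)
      {v : P → ZMod p | ∃ m ∈ L, v = fun x => if x ∈ m then (1 : ZMod p) else 0})
    (htype : ∀ c : ZMod p,
      (Finset.univ.filter fun x : P => w' x = c).card =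
        (Finset.univ.filter fun x : Q => w x = c).card) :
    ∃ ℓ' : Fin k → Finset P, Function.Injective ℓ' ∧ (∀ i, ℓ' i ∈ L) ∧
      (w' = fun x => ∑ i : Fin k, (2 ^ (i : ℕ) : ZMod p) *
        (if x ∈ ℓ' i then (1 : ZMod p) else 0)) ∧
      ∃ f : Q → P, Function.Injective f ∧ ∀ i, (ℓ i).image f = ℓ' i := by
  classical
  obtain ⟨hP, hlinecard, hpoint, hjoin, hmeet⟩ := hπ
  haveI : NeZero p := ⟨hp.ne_zero⟩
  have hp2 : 2 ≤ p := hp.two_le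
  -- basic helpers
  have hfeP : ∀ m : Finset P, Finset.univ.filter (fun x => x ∈ m) = m := by
    intro m; ext x; simp
  have hfeQ : ∀ m : Finset Q, Finset.univ.filter (fun y => y ∈ m) = m := by
    intro m; ext y; simp
  have hmcard : ∀ m ∈ L, ∀ m' ∈ L, m ≠ m' → (m ∩ m').card = 1 := by
    intro m hm m' hm' hne
    obtain ⟨x₀, hx₀, huniq⟩ := hmeet m hm m' hm' hne
    rw [Finset.card_eq_one]
    refine ⟨x₀, ?_⟩
    ext z
    simp only [Finset.mem_inter, Finset.mem_singleton]
    exact ⟨fun hz => huniq z hz, fun hz => hz ▸ hx₀⟩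
  have hpair : ∀ x y : P, x ≠ y → (L.filter fun m => x ∈ m ∧ y ∈ m).card = 1 := by
    intro x y hxy
    obtain ⟨m₀, hm₀, huniq⟩ := hjoin x y hxy
    rw [Finset.card_eq_one]
    refine ⟨m₀, ?_⟩
    ext m'
    simp only [Finset.mem_filter, Finset.mem_singleton]
    exact ⟨fun h => huniq m' ⟨h.1, h.2.1, h.2.2⟩, fun h => h ▸ ⟨hm₀.1, hm₀.2.1, hm₀.2.2⟩⟩
  have hdeg : ∀ x : P, (∑ m ∈ L, if x ∈ m then (1:ℕ) else 0) = p + 1 := by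
    intro x; rw [aux_sum_ind]; exact hpoint x
  have hchi : ∀ x y : P, (∑ m ∈ L, (if x ∈ m then (1:ℕ) else 0) * (if y ∈ m then 1 else 0))
      = 1 + p * (if x = y then 1 else 0) := by
    intro x y
    by_cases hxy : x = y
    · subst hxy
      have h1 : ∀ m : Finset P, (if x ∈ m then (1:ℕ) else 0) * (if x ∈ m then 1 else 0)
          = if x ∈ m then 1 else 0 := by
        intro m; by_cases h : x ∈ m <;> simp [h]
      rw [Finset.sum_congr rfl (fun m _ => h1 m), hdeg x, if_pos rfl]
      ring
    · have h1 : ∀ m : Finset P, (if x ∈ m then (1:ℕ) else 0) * (if y ∈ m then 1 else 0)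
          = if x ∈ m ∧ y ∈ m then 1 else 0 := by
        intro m; by_cases h : x ∈ m <;> by_cases h' : y ∈ m <;> simp [h, h']
      rw [Finset.sum_congr rfl (fun m _ => h1 m), aux_sum_ind, hpair x y hxy, if_neg hxy]
      ring
  have hLcard : L.card = p ^ 2 + p + 1 := by
    have h1 : (∑ m ∈ L, ∑ x : P, if x ∈ m then (1:ℕ) else 0) = L.card * (p + 1) := by
      rw [Finset.sum_congr rfl (fun m hm => ?_), Finset.sum_const, smul_eq_mul]
      rw [aux_sum_ind, hfeP m, hlinecard m hm]
    have h2 : (∑ m ∈ L, ∑ x : P, if x ∈ m then (1:ℕ) else 0) = (p ^ 2 + p + 1) * (p + 1) := by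
      rw [Finset.sum_comm, Finset.sum_congr rfl (fun x _ => hdeg x), Finset.sum_const,
        smul_eq_mul, Finset.card_univ, hP]
    have := h1.symm.trans h2
    exact Nat.eq_of_mul_eq_mul_right (by omega) this
  -- the integer word over Q
  set wint : Q → ℕ := fun y => ∑ i : Fin k, if y ∈ ℓ i then 2 ^ (i : ℕ) else 0 with hwint
  set B : ℕ := ∑ i : Fin k, 2 ^ (i : ℕ) with hB
  set A : ℕ := ∑ i : Fin k, 2 ^ (i : ℕ) * 2 ^ (i : ℕ) with hA
  have hBr : B + 1 = 2 ^ k := by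
    rw [hB, Fin.sum_univ_eq_sum_range (fun i => 2 ^ i) k]
    exact aux_geom k
  have hBp : B < p := by omega
  have hwic : ∀ y, w y = ((wint y : ℕ) : ZMod p) := by
    intro y
    rw [hw, hwint]
    push_cast
    refine Finset.sum_congr rfl (fun i _ => ?_)
    by_cases h : y ∈ ℓ i <;> simp [h]
  have hwlt : ∀ y, wint y ≤ B := by
    intro y
    refine Finset.sum_le_sum (fun i _ => ?_)
    by_cases h : y ∈ ℓ i <;> simp [h]
  -- integer word on P
  set N : P → ℕ := fun x => (w' x).val with hN
  have hNcast : ∀ x, ((N x : ℕ) : ZMod p) = w' x := fun x => ZMod.natCast_rightInverse (w' x)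
  have hNle : ∀ x, N x ≤ B := by
    intro x
    have h1 : x ∈ Finset.univ.filter (fun z : P => w' z = w' x) := by simp
    have h2 : 0 < (Finset.univ.filter (fun y : Q => w y = w' x)).card := by
      rw [← htype]; exact Finset.card_pos.mpr ⟨x, h1⟩
    obtain ⟨y, hy⟩ := Finset.card_pos.mp h2
    have hy' : w y = w' x := (Finset.mem_filter.mp hy).2
    have h3 : N x = wint y := by
      rw [hN]
      simp only
      rw [← hy', hwic y, ZMod.val_cast_of_lt (lt_of_le_of_lt (hwlt y) hBp)]
    rw [h3]; exact hwlt y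
  -- count transfer
  have hcnt : ∀ n : ℕ, n < p →
      (Finset.univ.filter fun x : P => N x = n).card =
      (Finset.univ.filter fun y : Q => wint y = n).card := by
    intro n hn
    have e1 : (Finset.univ.filter fun x : P => N x = n)
        = (Finset.univ.filter fun x : P => w' x = (n : ZMod p)) := by
      apply Finset.filter_congr
      intro x _
      constructor
      · intro h; rw [← hNcast x, h]
      · intro h
        have : (w' x).val = ((n : ZMod p)).val := by rw [h]
        rwa [ZMod.val_cast_of_lt hn] at this
    have e2 : (Finset.univ.filter fun y : Q => wint y = n)
        = (Finset.univ.filter fun y : Q => w y = (n : ZMod p)) := by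
      apply Finset.filter_congr
      intro y _
      constructor
      · intro h; rw [hwic y, h]
      · intro h
        have h2 : ((wint y : ℕ) : ZMod p) = ((n : ℕ) : ZMod p) := by rw [← hwic y, h]
        have h3 := (ZMod.natCast_eq_natCast_iff _ _ _).mp h2
        rwa [Nat.ModEq, Nat.mod_eq_of_lt (lt_of_le_of_lt (hwlt y) hBp),
          Nat.mod_eq_of_lt hn] at h3
    rw [e1, e2, htype]
  -- fiberwise sum transfer
  have htrans : ∀ g : ℕ → ℕ, (∑ x : P, g (N x)) = ∑ y : Q, g (wint y) := by
    intro g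
    have hmP : ∀ x : P, x ∈ Finset.univ → N x ∈ Finset.range p :=
      fun x _ => Finset.mem_range.mpr (lt_of_le_of_lt (hNle x) hBp)
    have hmQ : ∀ y : Q, y ∈ Finset.univ → wint y ∈ Finset.range p :=
      fun y _ => Finset.mem_range.mpr (lt_of_le_of_lt (hwlt y) hBp)
    rw [← Finset.sum_fiberwise_of_maps_to hmP (fun x => g (N x)),
        ← Finset.sum_fiberwise_of_maps_to hmQ (fun y => g (wint y))]
    refine Finset.sum_congr rfl (fun n hn => ?_)
    have hP' : (∑ x ∈ Finset.univ.filter (fun x : P => N x = n), g (N x))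
        = (Finset.univ.filter (fun x : P => N x = n)).card * g n := by
      rw [Finset.sum_congr rfl (fun x hx => by rw [(Finset.mem_filter.mp hx).2]),
        Finset.sum_const, smul_eq_mul]
    have hQ' : (∑ y ∈ Finset.univ.filter (fun y : Q => wint y = n), g (wint y))
        = (Finset.univ.filter (fun y : Q => wint y = n)).card * g n := by
      rw [Finset.sum_congr rfl (fun y hy => by rw [(Finset.mem_filter.mp hy).2]),
        Finset.sum_const, smul_eq_mul]
    rw [hP', hQ', hcnt n (Finset.mem_range.mp hn)]
  -- global sums over Q
  have hdegQ : ∀ i : Fin k, (∑ y : Q, if y ∈ ℓ i then (1:ℕ) else 0) = p + 1 := by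
    intro i
    rw [aux_sum_ind, hfeQ (ℓ i)]
    exact hYline (ℓ i) (hℓmem i)
  have hchiQ : ∀ i j : Fin k,
      (∑ y : Q, (if y ∈ ℓ i then (1:ℕ) else 0) * (if y ∈ ℓ j then 1 else 0))
      = 1 + p * (if i = j then 1 else 0) := by
    intro i j
    by_cases hij : i = j
    · subst hij
      have h1 : ∀ y : Q, (if y ∈ ℓ i then (1:ℕ) else 0) * (if y ∈ ℓ i then 1 else 0)
          = if y ∈ ℓ i then 1 else 0 := by
        intro y; by_cases h : y ∈ ℓ i <;> simp [h]
      rw [Finset.sum_congr rfl (fun y _ => h1 y), hdegQ i, if_pos rfl]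
      ring
    · have h1 : ∀ y : Q, (if y ∈ ℓ i then (1:ℕ) else 0) * (if y ∈ ℓ j then 1 else 0)
          = if y ∈ ℓ i ∧ y ∈ ℓ j then 1 else 0 := by
        intro y; by_cases h : y ∈ ℓ i <;> by_cases h' : y ∈ ℓ j <;> simp [h, h']
      have h2 : Finset.univ.filter (fun y : Q => y ∈ ℓ i ∧ y ∈ ℓ j) = ℓ i ∩ ℓ j := by
        ext y; simp
      rw [Finset.sum_congr rfl (fun y _ => h1 y), aux_sum_ind, h2,
        hYmeet (ℓ i) (hℓmem i) (ℓ j) (hℓmem j) (fun h => hij (hℓinj h)), if_neg hij]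
      ring
  have hWQ : (∑ y : Q, wint y) = (p + 1) * B := by
    rw [hwint]
    simp only
    rw [Finset.sum_comm]
    have h1 : ∀ i : Fin k, (∑ y : Q, if y ∈ ℓ i then 2 ^ (i:ℕ) else 0)
        = 2 ^ (i:ℕ) * (p + 1) := by
      intro i
      have : ∀ y : Q, (if y ∈ ℓ i then 2 ^ (i:ℕ) else 0)
          = 2 ^ (i:ℕ) * (if y ∈ ℓ i then 1 else 0) := by
        intro y; by_cases h : y ∈ ℓ i <;> simp [h]
      rw [Finset.sum_congr rfl (fun y _ => this y), ← Finset.mul_sum, hdegQ i]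
    rw [Finset.sum_congr rfl (fun i _ => h1 i), ← Finset.sum_mul, hB]
    ring
  have hS2Q : (∑ y : Q, wint y * wint y) = B * B + p * A := by
    have step1 : ∀ y : Q, wint y * wint y = ∑ i : Fin k, ∑ j : Fin k,
        (if y ∈ ℓ i then 2 ^ (i:ℕ) else 0) * (if y ∈ ℓ j then 2 ^ (j:ℕ) else 0) := by
      intro y
      rw [hwint]
      simp only
      rw [Finset.sum_mul_sum]
    rw [Finset.sum_congr rfl (fun y _ => step1 y)]
    rw [Finset.sum_comm]
    have step2 : ∀ i : Fin k, (∑ y : Q, ∑ j : Fin k,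
        (if y ∈ ℓ i then 2 ^ (i:ℕ) else 0) * (if y ∈ ℓ j then 2 ^ (j:ℕ) else 0))
        = ∑ j : Fin k, 2 ^ (i:ℕ) * 2 ^ (j:ℕ) * (1 + p * (if i = j then 1 else 0)) := by
      intro i
      rw [Finset.sum_comm]
      refine Finset.sum_congr rfl (fun j _ => ?_)
      have h1 : ∀ y : Q, (if y ∈ ℓ i then 2 ^ (i:ℕ) else 0) * (if y ∈ ℓ j then 2 ^ (j:ℕ) else 0)
          = 2 ^ (i:ℕ) * 2 ^ (j:ℕ) *
            ((if y ∈ ℓ i then 1 else 0) * (if y ∈ ℓ j then 1 else 0)) := by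
        intro y; by_cases h : y ∈ ℓ i <;> by_cases h' : y ∈ ℓ j <;> simp [h, h']
      rw [Finset.sum_congr rfl (fun y _ => h1 y), ← Finset.mul_sum, hchiQ i j]
    rw [Finset.sum_congr rfl (fun i _ => step2 i)]
    have step3 : ∀ i : Fin k, (∑ j : Fin k, 2 ^ (i:ℕ) * 2 ^ (j:ℕ) *
        (1 + p * (if i = j then 1 else 0)))
        = (∑ j : Fin k, 2 ^ (i:ℕ) * 2 ^ (j:ℕ)) + p * (2 ^ (i:ℕ) * 2 ^ (i:ℕ)) := by
      intro i
      have h1 : ∀ j : Fin k, 2 ^ (i:ℕ) * 2 ^ (j:ℕ) * (1 + p * (if i = j then 1 else 0))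
          = 2 ^ (i:ℕ) * 2 ^ (j:ℕ) + (if i = j then p * (2 ^ (i:ℕ) * 2 ^ (j:ℕ)) else 0) := by
        intro j; by_cases h : i = j <;> simp [h] <;> ring
      rw [Finset.sum_congr rfl (fun j _ => h1 j), Finset.sum_add_distrib, Finset.sum_ite_eq]
      simp
    rw [Finset.sum_congr rfl (fun i _ => step3 i), Finset.sum_add_distrib,
      ← Finset.sum_mul_sum, ← Finset.mul_sum, ← hB, ← hA]
  -- sums over P via transfer
  set W : ℕ := ∑ x : P, N x with hW
  set S2 : ℕ := ∑ x : P, N x * N x with hS2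
  have hWv : W = (p + 1) * B := by
    rw [hW, htrans (fun n => n)]; exact hWQ
  have hS2v : S2 = B * B + p * A := by
    rw [hS2, htrans (fun n => n * n)]; exact hS2Q
  -- codeword line sums
  have hcode : ∀ m ∈ L, (∑ x ∈ m, w' x) = ∑ x : P, w' x := by
    have key : ∀ (v : P → ZMod p), v ∈ Submodule.span (ZMod p)
        {v : P → ZMod p | ∃ m ∈ L, v = fun x => if x ∈ m then (1 : ZMod p) else 0} →
        ∀ m ∈ L, (∑ x ∈ m, v x) = ∑ x : P, v x := by
      intro v hv
      induction hv using Submodule.span_induction with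
      | mem v hv =>
        obtain ⟨m₀, hm₀, rfl⟩ := hv
        intro m hm
        have hcast : ∀ (s : Finset P), (∑ x ∈ s, if x ∈ m₀ then (1 : ZMod p) else 0)
            = ((s.filter (fun x => x ∈ m₀)).card : ZMod p) := by
          intro s
          rw [Finset.sum_ite, Finset.sum_const, Finset.sum_const_zero, add_zero, nsmul_eq_mul,
            mul_one]
        rw [hcast, hcast, hfeP m₀, Finset.filter_mem_eq_inter]
        by_cases hmm : m = m₀
        · subst hmm
          rw [Finset.inter_self, hlinecard m hm]
        · rw [hmcard m hm m₀ hm₀ hmm, hlinecard m₀ hm₀]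
          push_cast [ZMod.natCast_self]
          ring
      | zero => intro m hm; simp
      | add v u hv hu ihv ihu =>
        intro m hm
        simp only [Pi.add_apply, Finset.sum_add_distrib]
        rw [ihv m hm, ihu m hm]
      | smul a v hv ihv =>
        intro m hm
        simp only [Pi.smul_apply, smul_eq_mul, ← Finset.mul_sum]
        rw [ihv m hm]
    exact key w' hw'
  -- per-line integer sums
  set T : Finset P → ℕ := fun m => ∑ x ∈ m, N x with hT
  set t : Finset P → ℕ := fun m => T m / p with ht
  have hTline : ∀ m ∈ L, T m = p * t m + B := by
    intro m hm
    have h1 : ((T m : ℕ) : ZMod p) = ((W : ℕ) : ZMod p) := by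
      rw [hT, hW]
      push_cast
      rw [Finset.sum_congr rfl (fun x _ => hNcast x), Finset.sum_congr rfl (fun x (_ : x ∈ Finset.univ) => hNcast x)]
      exact hcode m hm
    have h2 : ((W : ℕ) : ZMod p) = ((B : ℕ) : ZMod p) := by
      rw [hWv]
      push_cast [ZMod.natCast_self]
      ring
    have h3 := (ZMod.natCast_eq_natCast_iff _ _ _).mp (h1.trans h2)
    rw [Nat.ModEq, Nat.mod_eq_of_lt hBp] at h3
    have h4 := Nat.div_add_mod (T m) p
    rw [h3] at h4
    show T m = p * (T m / p) + B
    exact h4.symm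
  -- χ expansion of T
  have hTchi : ∀ m : Finset P, T m = ∑ x : P, N x * (if x ∈ m then 1 else 0) := by
    intro m
    rw [hT]
    simp only
    have : ∀ x : P, N x * (if x ∈ m then 1 else 0) = if x ∈ m then N x else 0 := by
      intro x; by_cases h : x ∈ m <;> simp [h]
    rw [Finset.sum_congr rfl (fun x _ => this x), Finset.sum_ite_mem, Finset.univ_inter]
  -- moment 1
  have hsum_T : (∑ m ∈ L, T m) = (p + 1) * W := by
    rw [Finset.sum_congr rfl (fun m _ => hTchi m), Finset.sum_comm]
    have h1 : ∀ x : P, (∑ m ∈ L, N x * (if x ∈ m then 1 else 0)) = N x * (p + 1) := by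
      intro x; rw [← Finset.mul_sum, hdeg x]
    rw [Finset.sum_congr rfl (fun x _ => h1 x), ← Finset.sum_mul, ← hW]
    ring
  -- moment 2
  have hsum_TT : (∑ m ∈ L, T m * T m) = W * W + p * S2 := by
    have h1 : ∀ m : Finset P, T m * T m = ∑ x : P, ∑ y : P,
        N x * N y * ((if x ∈ m then 1 else 0) * (if y ∈ m then 1 else 0)) := by
      intro m
      rw [hTchi m, Finset.sum_mul_sum]
      refine Finset.sum_congr rfl (fun x _ => Finset.sum_congr rfl (fun y _ => by ring))
    rw [Finset.sum_congr rfl (fun m _ => h1 m), Finset.sum_comm]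
    have h2 : ∀ x : P, (∑ m ∈ L, ∑ y : P,
        N x * N y * ((if x ∈ m then 1 else 0) * (if y ∈ m then 1 else 0)))
        = ∑ y : P, N x * N y * (1 + p * (if x = y then 1 else 0)) := by
      intro x
      rw [Finset.sum_comm]
      refine Finset.sum_congr rfl (fun y _ => ?_)
      rw [← Finset.mul_sum, hchi x y]
    rw [Finset.sum_congr rfl (fun x _ => h2 x)]
    have h3 : ∀ x : P, (∑ y : P, N x * N y * (1 + p * (if x = y then 1 else 0)))
        = (∑ y : P, N x * N y) + p * (N x * N x) := by
      intro x
      have h4 : ∀ y : P, N x * N y * (1 + p * (if x = y then 1 else 0))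
          = N x * N y + (if x = y then p * (N x * N y) else 0) := by
        intro y; by_cases h : x = y <;> simp [h] <;> ring
      rw [Finset.sum_congr rfl (fun y _ => h4 y), Finset.sum_add_distrib, Finset.sum_ite_eq]
      simp
    rw [Finset.sum_congr rfl (fun x _ => h3 x), Finset.sum_add_distrib,
      ← Finset.sum_mul_sum, ← Finset.mul_sum, ← hW, ← hS2]
  -- pointwise
  have hsum_xT : ∀ x : P, (∑ m ∈ L.filter (fun m => x ∈ m), T m) = W + p * N x := by
    intro x
    rw [Finset.sum_filter]
    have h1 : ∀ m : Finset P, (if x ∈ m then T m else 0)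
        = ∑ y : P, N y * ((if x ∈ m then 1 else 0) * (if y ∈ m then 1 else 0)) := by
      intro m
      by_cases h : x ∈ m
      · simp only [h, if_true, one_mul]
        exact hTchi m
      · simp [h]
    rw [Finset.sum_congr rfl (fun m _ => h1 m), Finset.sum_comm]
    have h2 : ∀ y : P, (∑ m ∈ L, N y * ((if x ∈ m then 1 else 0) * (if y ∈ m then 1 else 0)))
        = N y * (1 + p * (if x = y then 1 else 0)) := by
      intro y; rw [← Finset.mul_sum, hchi x y]
    rw [Finset.sum_congr rfl (fun y _ => h2 y)]
    have h3 : ∀ y : P, N y * (1 + p * (if x = y then 1 else 0))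
        = N y + (if x = y then p * N y else 0) := by
      intro y; by_cases h : x = y <;> simp [h] <;> ring
    rw [Finset.sum_congr rfl (fun y _ => h3 y), Finset.sum_add_distrib, Finset.sum_ite_eq]
    simp [hW]
  -- deduce t moments
  have hsum_t : (∑ m ∈ L, t m) = B := by
    have h1 : (∑ m ∈ L, T m) = p * (∑ m ∈ L, t m) + L.card * B := by
      rw [Finset.sum_congr rfl (fun m hm => hTline m hm), Finset.sum_add_distrib,
        Finset.sum_const, ← Finset.mul_sum, smul_eq_mul]
    rw [hsum_T, hWv, hLcard] at h1
    have h3 := congrArg (fun n : ℕ => (n : ℤ)) h1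
    push_cast at h3
    have h5 : (p:ℤ) * (∑ m ∈ L, (t m : ℤ)) = (p:ℤ) * (B:ℤ) := by linear_combination -h3
    have h6 := mul_left_cancel₀ (show (p:ℤ) ≠ 0 by exact_mod_cast hp.ne_zero) h5
    exact_mod_cast h6
  have hsum_tt : (∑ m ∈ L, t m * t m) = A := by
    have h1 : (∑ m ∈ L, T m * T m)
        = p * p * (∑ m ∈ L, t m * t m) + 2 * p * B * (∑ m ∈ L, t m) + L.card * (B * B) := by
      have h0 : ∀ m ∈ L, T m * T m
          = p * p * (t m * t m) + 2 * p * B * t m + B * B := by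
        intro m hm; rw [hTline m hm]; ring
      rw [Finset.sum_congr rfl h0, Finset.sum_add_distrib, Finset.sum_add_distrib,
        Finset.sum_const, ← Finset.mul_sum, ← Finset.mul_sum, smul_eq_mul]
    rw [hsum_TT, hWv, hS2v, hLcard, hsum_t] at h1
    have h3 := congrArg (fun n : ℕ => (n : ℤ)) h1
    push_cast at h3
    have h5 : ((p:ℤ) * p) * (∑ m ∈ L, (t m : ℤ) * (t m : ℤ)) = ((p:ℤ) * p) * (A:ℤ) := by
      linear_combination -h3
    have h6 := mul_left_cancel₀
      (mul_ne_zero (show (p:ℤ) ≠ 0 by exact_mod_cast hp.ne_zero)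
        (show (p:ℤ) ≠ 0 by exact_mod_cast hp.ne_zero)) h5
    exact_mod_cast h6
  have hNt : ∀ x : P, (∑ m ∈ L.filter (fun m => x ∈ m), t m) = N x := by
    intro x
    have h1 : (∑ m ∈ L.filter (fun m => x ∈ m), T m)
        = p * (∑ m ∈ L.filter (fun m => x ∈ m), t m) + (p + 1) * B := by
      rw [Finset.sum_congr rfl (fun m hm => hTline m (Finset.mem_filter.mp hm).1),
        Finset.sum_add_distrib, Finset.sum_const, ← Finset.mul_sum, smul_eq_mul, hpoint x]
    rw [hsum_xT x, hWv] at h1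
    have h3 := congrArg (fun n : ℕ => (n : ℤ)) h1
    push_cast at h3
    have h5 : (p:ℤ) * (∑ m ∈ L.filter (fun m => x ∈ m), (t m : ℤ)) = (p:ℤ) * (N x : ℤ) := by
      linear_combination -h3
    have h6 := mul_left_cancel₀ (show (p:ℤ) ≠ 0 by exact_mod_cast hp.ne_zero) h5
    exact_mod_cast h6
  -- support of t
  set supp : Finset (Finset P) := L.filter (fun m => ¬ t m = 0) with hsupp
  have hsupp_sub : supp ⊆ L := Finset.filter_subset _ _
  have hts : (∑ m ∈ supp, t m) = B := by
    rw [← hsum_t]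
    exact Finset.sum_subset hsupp_sub (fun m hm hnm => by
      by_contra h
      exact hnm (Finset.mem_filter.mpr ⟨hm, h⟩))
  set r : ℕ := supp.card with hr
  have hrB : r ≤ B := by
    rw [← hts, hr]
    calc supp.card = ∑ _m ∈ supp, 1 := by rw [Finset.sum_const, smul_eq_mul, mul_one]
      _ ≤ ∑ m ∈ supp, t m := Finset.sum_le_sum
          (fun m hm => Nat.one_le_iff_ne_zero.mpr (Finset.mem_filter.mp hm).2)
  have hNsupp : ∀ x : P, (∑ m ∈ supp.filter (fun m => x ∈ m), t m) = N x := by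
    intro x
    rw [← hNt x]
    apply Finset.sum_subset
    · intro m hm
      rw [Finset.mem_filter] at hm ⊢
      exact ⟨hsupp_sub hm.1, hm.2⟩
    · intro m hm hnm
      by_contra h
      have hm' := Finset.mem_filter.mp hm
      exact hnm (Finset.mem_filter.mpr ⟨Finset.mem_filter.mpr ⟨hm'.1, h⟩, hm'.2⟩)
  -- Bonferroni bound
  have hbonf : ∀ s : Finset (Finset P), s ⊆ L →
      2 * s.card * (p + 1) ≤ 2 * (s.biUnion id).card + s.card * (s.card - 1) := by
    intro s
    induction s using Finset.induction_on with
    | empty => intro _; simp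
    | @insert a s ha ih =>
      intro hs
      have haL : a ∈ L := hs (Finset.mem_insert_self a s)
      have hsL : s ⊆ L := fun m hm => hs (Finset.mem_insert_of_mem hm)
      have ih' := ih hsL
      have hcap : (a ∩ s.biUnion id).card ≤ s.card := by
        have h1 : a ∩ s.biUnion id = s.biUnion (fun m => a ∩ m) := by
          ext z
          simp only [Finset.mem_inter, Finset.mem_biUnion, id]
          tauto
        rw [h1]
        calc (s.biUnion fun m => a ∩ m).card ≤ ∑ m ∈ s, (a ∩ m).card :=
              Finset.card_biUnion_le
          _ ≤ ∑ _m ∈ s, 1 := Finset.sum_le_sum (fun m hm => by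
              rw [hmcard a haL m (hsL hm) (fun h => ha (h ▸ hm))])
          _ = s.card := by rw [Finset.sum_const, smul_eq_mul, mul_one]
      have hU : ((insert a s).biUnion id) = a ∪ s.biUnion id := Finset.biUnion_insert
      have hcards := Finset.card_union_add_card_inter a (s.biUnion id)
      have hacard : a.card = p + 1 := hlinecard a haL
      rw [Finset.card_insert_of_notMem ha, hU]
      rw [hacard] at hcards
      have E1 : 2 * (s.card + 1) * (p + 1) = 2 * s.card * (p + 1) + 2 * (p + 1) := by ring
      have E2 : (s.card + 1) * ((s.card + 1) - 1) = s.card * (s.card - 1) + 2 * s.card := by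
        cases s.card with
        | zero => simp
        | succ n => simp only [Nat.add_sub_cancel, Nat.succ_sub_one]; ring
      rw [E1, E2]
      linarith only [ih', hcap, hcards]
  -- count of nonzero points transfers and is at most k(p+1)
  have hposcard : (Finset.univ.filter (fun x : P => ¬ N x = 0)).card
      = (Finset.univ.filter (fun y : Q => ¬ wint y = 0)).card := by
    have h0 := hcnt 0 (by omega)
    have hP2 := Finset.card_filter_add_card_filter_not
      (s := (Finset.univ : Finset P)) (p := fun x : P => N x = 0)
    have hQ2 := Finset.card_filter_add_card_filter_not
      (s := (Finset.univ : Finset Q)) (p := fun y : Q => wint y = 0)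
    rw [Finset.card_univ, hP] at hP2
    rw [Finset.card_univ, hQcard] at hQ2
    omega
  have hposQ : (Finset.univ.filter (fun y : Q => ¬ wint y = 0)).card ≤ k * (p + 1) := by
    have hsub : Finset.univ.filter (fun y : Q => ¬ wint y = 0)
        ⊆ Finset.univ.biUnion (fun i : Fin k => ℓ i) := by
      intro y hy
      have hy' := (Finset.mem_filter.mp hy).2
      rw [Finset.mem_biUnion]
      by_contra h
      push_neg at h
      apply hy'
      rw [hwint]
      simp only
      apply Finset.sum_eq_zero
      intro i _
      rw [if_neg (h i (Finset.mem_univ i))]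
    calc (Finset.univ.filter (fun y : Q => ¬ wint y = 0)).card
        ≤ (Finset.univ.biUnion (fun i : Fin k => ℓ i)).card := Finset.card_le_card hsub
      _ ≤ ∑ i : Fin k, (ℓ i).card := Finset.card_biUnion_le
      _ = ∑ _i : Fin k, (p + 1) := Finset.sum_congr rfl (fun i _ => hYline (ℓ i) (hℓmem i))
      _ = k * (p + 1) := by
          rw [Finset.sum_const, Finset.card_univ, Fintype.card_fin, smul_eq_mul]
  have hUpos : (supp.biUnion id).card ≤ k * (p + 1) := by
    refine le_trans (le_trans (Finset.card_le_card ?_) (le_of_eq hposcard)) hposQ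
    intro x hx
    obtain ⟨m, hm, hxm⟩ := Finset.mem_biUnion.mp hx
    rw [Finset.mem_filter]
    refine ⟨Finset.mem_univ x, ?_⟩
    have h1 : t m ≤ N x := by
      rw [← hNsupp x]
      exact Finset.single_le_sum (fun m' _ => Nat.zero_le _)
        (Finset.mem_filter.mpr ⟨hm, hxm⟩)
    have h2 : ¬ t m = 0 := (Finset.mem_filter.mp hm).2
    omega
  -- r ≤ k
  have hrk : r ≤ k := by
    by_contra hcon
    push_neg at hcon
    have hb := hbonf supp hsupp_sub
    rw [← hr] at hb
    rcases Nat.lt_or_ge k 2 with hk2 | hk2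
    · have hk01 : k = 0 ∨ k = 1 := by omega
      have hX : 2 ^ k ≤ k + 1 := by
        rcases hk01 with h | h <;> rw [h] <;> norm_num
      omega
    · have hE4 : 4 ≤ 2 ^ k := by
        calc 4 = 2 ^ 2 := rfl
          _ ≤ 2 ^ k := Nat.pow_le_pow_right (by norm_num) hk2
      have h2k : 2 * k ≤ 2 ^ k := aux_2k k
      have hkk : k * (k + 1) ≤ 2 * 2 ^ k := by
        have := aux_kk k
        rwa [pow_succ, mul_comm (2 ^ k) 2] at this
      have hklt : k < 2 ^ k := Nat.lt_two_pow_self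
      have hr1 : 1 ≤ r := by omega
      set U : ℕ := (supp.biUnion id).card with hUdef
      -- move to ℤ
      have hbz : 2 * (r : ℤ) * ((p : ℤ) + 1) ≤ 2 * (U : ℤ) + (r : ℤ) * ((r : ℤ) - 1) := by
        have h := (Nat.cast_le (α := ℤ)).mpr hb
        push_cast [Nat.cast_sub hr1] at h
        linarith only [h]
      have hUz : (U : ℤ) ≤ (k : ℤ) * ((p : ℤ) + 1) := by exact_mod_cast hUpos
      set E : ℤ := ((2 : ℤ) ^ k) with hEdef
      have hEp : E ≤ (p : ℤ) := by rw [hEdef]; exact_mod_cast hpk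
      have hE4' : (4 : ℤ) ≤ E := by rw [hEdef]; exact_mod_cast hE4
      have h2k' : 2 * (k : ℤ) ≤ E := by rw [hEdef]; exact_mod_cast h2k
      have hkk' : (k : ℤ) * ((k : ℤ) + 1) ≤ 2 * E := by rw [hEdef]; exact_mod_cast hkk
      have hklt' : (k : ℤ) + 1 ≤ E := by rw [hEdef]; exact_mod_cast hklt
      have hrB' : (r : ℤ) ≤ E - 1 := by
        have h1 : (r : ℤ) ≤ (B : ℤ) := by exact_mod_cast hrB
        have h2 : (B : ℤ) + 1 = E := by rw [hEdef]; exact_mod_cast hBr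
        linarith only [h1, h2]
      have hcon' : (k : ℤ) + 1 ≤ (r : ℤ) := by exact_mod_cast hcon
      set μ : ℤ := (r : ℤ) - (k : ℤ) - 1 with hμdef
      set ν : ℤ := E - 1 - (r : ℤ) with hνdef
      have hμ : 0 ≤ μ := by rw [hμdef]; linarith only [hcon']
      have hν : 0 ≤ ν := by rw [hνdef]; linarith only [hrB']
      set qa : ℤ := 2 * ((p : ℤ) + 1) - ((k : ℤ) + 1) * (k : ℤ) with hqadef
      set qb : ℤ := 2 * ((p : ℤ) + 1) * (E - 1 - (k : ℤ)) - (E - 1) * (E - 2) with hqbdef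
      set qq : ℤ := 2 * ((p : ℤ) + 1) * ((r : ℤ) - (k : ℤ)) - (r : ℤ) * ((r : ℤ) - 1)
        with hqqdef
      have hqa : 1 ≤ qa := by
        rw [hqadef]
        linarith only [hkk', hEp]
      have hqb : 1 ≤ qb := by
        rw [hqbdef]
        have h1 : (0 : ℤ) ≤ E - 1 - (k : ℤ) := by linarith only [hklt']
        have hprod : 0 ≤ ((p : ℤ) - E) * (E - 1 - (k : ℤ)) :=
          mul_nonneg (sub_nonneg.mpr hEp) h1
        have h3 : 2 * (k : ℤ) * (E + 1) ≤ E * (E + 1) :=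
          mul_le_mul_of_nonneg_right h2k' (by linarith only [hE4'])
        linarith only [hprod, h3, hE4']
      have hqle : qq ≤ 0 := by
        rw [hqqdef]
        linarith only [hbz, hUz]
      have hid : (μ + ν) * qq = ν * qa + μ * qb + (μ + ν) * (μ * ν) := by
        rw [hμdef, hνdef, hqadef, hqbdef, hqqdef]
        ring
      have t1 : ν * 1 ≤ ν * qa := mul_le_mul_of_nonneg_left hqa hν
      have t2 : μ * 1 ≤ μ * qb := mul_le_mul_of_nonneg_left hqb hμ
      have t3 : (0 : ℤ) ≤ (μ + ν) * (μ * ν) := by positivity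
      have t4 : (μ + ν) * qq ≤ 0 := by
        have := mul_le_mul_of_nonneg_left hqle (show (0:ℤ) ≤ μ + ν by linarith)
        simpa using this
      have hμ0 : μ ≤ 0 := by linarith only [hid, t1, t2, t3, t4, hν]
      have hμν0 : μ = 0 := le_antisymm hμ0 hμ
      have hreq : (r : ℤ) = (k : ℤ) + 1 := by rw [hμdef] at hμν0; linarith only [hμν0]
      have hrk1 : r = k + 1 := by exact_mod_cast hreq
      rw [hrk1] at hb
      have hsimp : (k + 1) * ((k + 1) - 1) = (k + 1) * k := by simp
      rw [hsimp] at hb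
      have hbz2 : 2 * ((k:ℤ) + 1) * ((p:ℤ) + 1) ≤ 2 * (U:ℤ) + ((k:ℤ) + 1) * (k:ℤ) := by
        exact_mod_cast hb
      linarith only [hbz2, hUz, hkk', hEp]
  -- binary-digit subsets
  have hsig := aux_sig_inj (k := k)
  have hTy : ∀ y : Q, wint y
      = ∑ i ∈ Finset.univ.filter (fun i : Fin k => y ∈ ℓ i), 2 ^ (i : ℕ) := by
    intro y
    rw [hwint]
    simp only
    rw [Finset.sum_filter]
  -- every support line has t a power of two
  have hpow_supp : ∀ m ∈ supp, ∃ i : Fin k, t m = 2 ^ (i : ℕ) := by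
    intro m hm
    have hmL : m ∈ L := hsupp_sub hm
    have htm0 : ¬ t m = 0 := (Finset.mem_filter.mp hm).2
    have hcap : (m ∩ (supp.erase m).biUnion id).card ≤ r - 1 := by
      have h1 : m ∩ (supp.erase m).biUnion id
          = (supp.erase m).biUnion (fun m' => m ∩ m') := by
        ext z
        simp only [Finset.mem_inter, Finset.mem_biUnion, id]
        tauto
      rw [h1]
      calc ((supp.erase m).biUnion fun m' => m ∩ m').card
          ≤ ∑ m' ∈ supp.erase m, (m ∩ m').card := Finset.card_biUnion_le
        _ ≤ ∑ _m' ∈ supp.erase m, 1 := Finset.sum_le_sum (fun m' hm' => by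
            have h2 := Finset.mem_erase.mp hm'
            rw [hmcard m hmL m' (hsupp_sub h2.2) (fun h => h2.1 h.symm)])
        _ = (supp.erase m).card := by rw [Finset.sum_const, smul_eq_mul, mul_one]
        _ = r - 1 := by rw [Finset.card_erase_of_mem hm, hr]
    have hsd : 2 ≤ (m \ (supp.erase m).biUnion id).card := by
      have h1 := Finset.card_sdiff_add_card_inter m ((supp.erase m).biUnion id)
      have h2 : m.card = p + 1 := hlinecard m hmL
      have hr1 : 1 ≤ r := by
        rw [hr]
        exact Finset.card_pos.mpr ⟨m, hm⟩
      omega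
    obtain ⟨x₁, hx₁, x₂, hx₂, hx12⟩ := Finset.one_lt_card.mp
      (by omega : 1 < (m \ (supp.erase m).biUnion id).card)
    have key : ∀ x ∈ m \ (supp.erase m).biUnion id, N x = t m := by
      intro x hx
      rw [← hNsupp x]
      have h1 : supp.filter (fun m' => x ∈ m') = {m} := by
        ext m'
        simp only [Finset.mem_filter, Finset.mem_singleton]
        constructor
        · rintro ⟨hmm1, hmm2⟩
          by_contra hne
          exact (Finset.mem_sdiff.mp hx).2
            (Finset.mem_biUnion.mpr ⟨m', Finset.mem_erase.mpr ⟨hne, hmm1⟩, hmm2⟩)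
        · rintro rfl
          exact ⟨hm, (Finset.mem_sdiff.mp hx).1⟩
      rw [h1, Finset.sum_singleton]
    have h2card : 2 ≤ (Finset.univ.filter (fun x : P => N x = t m)).card := by
      have hsub : ({x₁, x₂} : Finset P) ⊆ Finset.univ.filter (fun x : P => N x = t m) := by
        intro z hz
        rcases Finset.mem_insert.mp hz with rfl | hz
        · exact Finset.mem_filter.mpr ⟨Finset.mem_univ _, key z hx₁⟩
        · rw [Finset.mem_singleton] at hz
          subst hz
          exact Finset.mem_filter.mpr ⟨Finset.mem_univ _, key z hx₂⟩
      calc 2 = ({x₁, x₂} : Finset P).card := (Finset.card_pair hx12).symm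
        _ ≤ _ := Finset.card_le_card hsub
    have htmB : t m ≤ B := by
      rw [← hts]
      exact Finset.single_le_sum (fun m' _ => Nat.zero_le _) hm
    have h2Q : 2 ≤ (Finset.univ.filter (fun y : Q => wint y = t m)).card := by
      rw [← hcnt (t m) (lt_of_le_of_lt htmB hBp)]
      exact h2card
    obtain ⟨y₁, hy₁, y₂, hy₂, hy12⟩ := Finset.one_lt_card.mp
      (by omega : 1 < (Finset.univ.filter (fun y : Q => wint y = t m)).card)
    have hv₁ : wint y₁ = t m := (Finset.mem_filter.mp hy₁).2
    have hv₂ : wint y₂ = t m := (Finset.mem_filter.mp hy₂).2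
    have hSS : Finset.univ.filter (fun i : Fin k => y₁ ∈ ℓ i)
        = Finset.univ.filter (fun i : Fin k => y₂ ∈ ℓ i) :=
      hsig _ _ (by rw [← hTy y₁, ← hTy y₂, hv₁, hv₂])
    have hne : (Finset.univ.filter (fun i : Fin k => y₁ ∈ ℓ i)).Nonempty := by
      rw [Finset.nonempty_iff_ne_empty]
      intro h
      apply htm0
      rw [← hv₁, hTy y₁, h, Finset.sum_empty]
    have hcard1 : (Finset.univ.filter (fun i : Fin k => y₁ ∈ ℓ i)).card = 1 := by
      by_contra hc
      have hgt : 1 < (Finset.univ.filter (fun i : Fin k => y₁ ∈ ℓ i)).card := by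
        have := Finset.card_pos.mpr hne
        omega
      obtain ⟨i, hi, j, hj, hij⟩ := Finset.one_lt_card.mp hgt
      have hyi₁ : y₁ ∈ ℓ i := (Finset.mem_filter.mp hi).2
      have hyj₁ : y₁ ∈ ℓ j := (Finset.mem_filter.mp hj).2
      have hi' := hi
      rw [hSS] at hi'
      have hj' := hj
      rw [hSS] at hj'
      have hyi₂ : y₂ ∈ ℓ i := (Finset.mem_filter.mp hi').2
      have hyj₂ : y₂ ∈ ℓ j := (Finset.mem_filter.mp hj').2
      have hone := hYmeet (ℓ i) (hℓmem i) (ℓ j) (hℓmem j) (fun h => hij (hℓinj h))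
      have hsub : ({y₁, y₂} : Finset Q) ⊆ ℓ i ∩ ℓ j := by
        intro z hz
        rcases Finset.mem_insert.mp hz with rfl | hz
        · exact Finset.mem_inter.mpr ⟨hyi₁, hyj₁⟩
        · rw [Finset.mem_singleton] at hz
          subst hz
          exact Finset.mem_inter.mpr ⟨hyi₂, hyj₂⟩
      have hle := Finset.card_le_card hsub
      rw [Finset.card_pair hy12, hone] at hle
      omega
    obtain ⟨i, hi⟩ := Finset.card_eq_one.mp hcard1
    refine ⟨i, ?_⟩
    rw [← hv₁, hTy y₁, hi, Finset.sum_singleton]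
  -- the multiset of t-values is exactly the powers of two
  have hms : (supp.val.map t) = (Multiset.range k).map (2 ^ ·) := by
    apply aux_multiset_eq
    · intro a ha
      obtain ⟨m, hm, rfl⟩ := Multiset.mem_map.mp ha
      obtain ⟨i, hi⟩ := hpow_supp m (Finset.mem_def.mpr hm)
      exact ⟨(i : ℕ), hi⟩
    · have h1 : (supp.val.map t).sum = ∑ m ∈ supp, t m := rfl
      rw [h1, hts, hBr]
    · have h1 : Multiset.card (supp.val.map t) = r := by
        rw [Multiset.card_map]
        rfl
      rw [h1]
      exact hrk
  have hcount : ∀ i : Fin k, (supp.filter (fun m => 2 ^ (i : ℕ) = t m)).card = 1 := by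
    intro i
    have h1 : (supp.filter (fun m => 2 ^ (i : ℕ) = t m)).card
        = Multiset.count (2 ^ (i : ℕ)) (supp.val.map t) := by
      rw [Multiset.count_map]
      rfl
    rw [h1, hms]
    have hnd : ((Multiset.range k).map (2 ^ ·)).Nodup :=
      Multiset.Nodup.map (fun a b h => Nat.pow_right_injective le_rfl h)
        (Multiset.nodup_range k)
    have hmem : (2 : ℕ) ^ (i : ℕ) ∈ (Multiset.range k).map (2 ^ ·) :=
      Multiset.mem_map.mpr ⟨(i : ℕ), Multiset.mem_range.mpr i.isLt, rfl⟩
    have hle := Multiset.nodup_iff_count_le_one.mp hnd (2 ^ (i : ℕ))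
    have hge := Multiset.one_le_count_iff_mem.mpr hmem
    omega
  have hexu : ∀ i : Fin k, ∃ m, supp.filter (fun m => 2 ^ (i : ℕ) = t m) = {m} :=
    fun i => Finset.card_eq_one.mp (hcount i)
  choose ℓ' hℓ' using hexu
  have hℓ's : ∀ i, ℓ' i ∈ supp ∧ 2 ^ (i : ℕ) = t (ℓ' i) := by
    intro i
    have h1 : ℓ' i ∈ supp.filter (fun m => 2 ^ (i : ℕ) = t m) := by
      rw [hℓ' i]
      exact Finset.mem_singleton_self _
    exact Finset.mem_filter.mp h1
  have hℓ'L : ∀ i, ℓ' i ∈ L := fun i => hsupp_sub (hℓ's i).1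
  have hℓ'inj : Function.Injective ℓ' := by
    intro i j hij
    have h1 := (hℓ's i).2
    have h2 := (hℓ's j).2
    rw [← hij] at h2
    exact Fin.ext (Nat.pow_right_injective le_rfl (h1.trans h2.symm))
  have hsurj : ∀ m ∈ supp, ∃ i : Fin k, m = ℓ' i := by
    intro m hm
    obtain ⟨i, hi⟩ := hpow_supp m hm
    refine ⟨i, ?_⟩
    have h1 : m ∈ supp.filter (fun m => 2 ^ (i : ℕ) = t m) :=
      Finset.mem_filter.mpr ⟨hm, hi.symm⟩
    rw [hℓ' i] at h1
    exact Finset.mem_singleton.mp h1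
  have hNform : ∀ x : P, N x = ∑ i : Fin k, (if x ∈ ℓ' i then 2 ^ (i : ℕ) else 0) := by
    intro x
    rw [← hNsupp x, Finset.sum_filter]
    symm
    apply Finset.sum_bij (fun (i : Fin k) (_ : i ∈ Finset.univ) => ℓ' i)
    · intro i _
      exact (hℓ's i).1
    · intro i _ j _ h
      exact hℓ'inj h
    · intro m hm
      obtain ⟨i, hi⟩ := hsurj m hm
      exact ⟨i, Finset.mem_univ i, hi.symm⟩
    · intro i _
      rw [← (hℓ's i).2]
  have hNsig : ∀ x : P, N x
      = ∑ i ∈ Finset.univ.filter (fun i : Fin k => x ∈ ℓ' i), 2 ^ (i : ℕ) := by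
    intro x
    rw [hNform x, Finset.sum_filter]
  have hclass : ∀ S : Finset (Fin k),
      (Finset.univ.filter (fun x : P =>
        Finset.univ.filter (fun i : Fin k => x ∈ ℓ' i) = S)).card
      = (Finset.univ.filter (fun y : Q =>
        Finset.univ.filter (fun i : Fin k => y ∈ ℓ i) = S)).card := by
    intro S
    have hSB : (∑ i ∈ S, 2 ^ (i : ℕ)) ≤ B := by
      rw [hB]
      exact Finset.sum_le_sum_of_subset (Finset.subset_univ S)
    have e1 : (Finset.univ.filter (fun x : P =>
        Finset.univ.filter (fun i : Fin k => x ∈ ℓ' i) = S))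
        = Finset.univ.filter (fun x : P => N x = ∑ i ∈ S, 2 ^ (i : ℕ)) := by
      apply Finset.filter_congr
      intro x _
      constructor
      · intro h
        rw [hNsig x, h]
      · intro h
        exact hsig _ _ (by rw [← hNsig x, h])
    have e2 : (Finset.univ.filter (fun y : Q =>
        Finset.univ.filter (fun i : Fin k => y ∈ ℓ i) = S))
        = Finset.univ.filter (fun y : Q => wint y = ∑ i ∈ S, 2 ^ (i : ℕ)) := by
      apply Finset.filter_congr
      intro y _
      constructor
      · intro h
        rw [hTy y, h]
      · intro h
        exact hsig _ _ (by rw [← hTy y, h])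
    rw [e1, e2, hcnt _ (lt_of_le_of_lt hSB hBp)]
  -- final assembly
  refine ⟨ℓ', hℓ'inj, hℓ'L, ?_, ?_⟩
  · funext x
    have h1 : w' x = ((N x : ℕ) : ZMod p) := (hNcast x).symm
    rw [h1, hNform x]
    push_cast
    refine Finset.sum_congr rfl (fun i _ => ?_)
    by_cases h : x ∈ ℓ' i <;> simp [h]
  · -- build the monomorphism class by class
    let g : (S : Finset (Fin k)) →
        ↥(Finset.univ.filter (fun y : Q =>
          Finset.univ.filter (fun i : Fin k => y ∈ ℓ i) = S)) ≃
        ↥(Finset.univ.filter (fun x : P =>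
          Finset.univ.filter (fun i : Fin k => x ∈ ℓ' i) = S)) :=
      fun S => Fintype.equivOfCardEq
        (by rw [Fintype.card_coe, Fintype.card_coe]; exact (hclass S).symm)
    let fQP : Q → P := fun y =>
      ((g (Finset.univ.filter (fun i : Fin k => y ∈ ℓ i)))
        ⟨y, Finset.mem_filter.mpr ⟨Finset.mem_univ y, rfl⟩⟩).val
    have hfdef : ∀ (y : Q) (S : Finset (Fin k))
        (h : Finset.univ.filter (fun i : Fin k => y ∈ ℓ i) = S),
        fQP y = ((g S) ⟨y, Finset.mem_filter.mpr ⟨Finset.mem_univ y, h⟩⟩).val := by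
      intro y S h
      subst h
      rfl
    have hfmem : ∀ y : Q, Finset.univ.filter (fun i : Fin k => (fQP y) ∈ ℓ' i)
        = Finset.univ.filter (fun i : Fin k => y ∈ ℓ i) := by
      intro y
      have h1 := ((g (Finset.univ.filter (fun i : Fin k => y ∈ ℓ i)))
        ⟨y, Finset.mem_filter.mpr ⟨Finset.mem_univ y, rfl⟩⟩).2
      exact (Finset.mem_filter.mp h1).2
    refine ⟨fQP, ?_, ?_⟩
    · intro y₁ y₂ he
      have hT12 : Finset.univ.filter (fun i : Fin k => y₁ ∈ ℓ i)
          = Finset.univ.filter (fun i : Fin k => y₂ ∈ ℓ i) := by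
        rw [← hfmem y₁, ← hfmem y₂, he]
      have e1 := hfdef y₁ _ hT12
      have e2 := hfdef y₂ _ rfl
      rw [e1, e2] at he
      have h3 := (g _).injective (Subtype.coe_injective he)
      exact congrArg Subtype.val h3
    · intro i
      ext x
      simp only [Finset.mem_image]
      constructor
      · rintro ⟨y, hy, rfl⟩
        have h1 := hfmem y
        have h2 : i ∈ Finset.univ.filter (fun j : Fin k => y ∈ ℓ j) :=
          Finset.mem_filter.mpr ⟨Finset.mem_univ i, hy⟩
        rw [← h1] at h2
        exact (Finset.mem_filter.mp h2).2
      · intro hx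
        have hxm : x ∈ Finset.univ.filter (fun z : P =>
            Finset.univ.filter (fun j : Fin k => z ∈ ℓ' j)
            = Finset.univ.filter (fun j : Fin k => x ∈ ℓ' j)) :=
          Finset.mem_filter.mpr ⟨Finset.mem_univ x, rfl⟩
        set S : Finset (Fin k) := Finset.univ.filter (fun j : Fin k => x ∈ ℓ' j) with hSdef
        let y' := (g S).symm ⟨x, hxm⟩
        have hTy' : Finset.univ.filter (fun j : Fin k => (y' : Q) ∈ ℓ j) = S :=
          (Finset.mem_filter.mp y'.2).2
        refine ⟨y'.1, ?_, ?_⟩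
        · have hiS : i ∈ S := by
            rw [hSdef]
            exact Finset.mem_filter.mpr ⟨Finset.mem_univ i, hx⟩
          rw [← hTy'] at hiS
          exact (Finset.mem_filter.mp hiS).2
        · have e1 := hfdef y'.1 S hTy'
          rw [e1]
          have e2 : (⟨y'.1, Finset.mem_filter.mpr ⟨Finset.mem_univ _, hTy'⟩⟩ :
              ↥(Finset.univ.filter (fun y : Q =>
                Finset.univ.filter (fun j : Fin k => y ∈ ℓ j) = S))) = y' :=
            Subtype.ext rfl
          rw [e2]
          show ((g S) ((g S).symm ⟨x, hxm⟩)).val = x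
          rw [Equiv.apply_symm_apply]
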